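/- Let Γ = A*_φ with C_{-1} = C_{+1} = A, so φ is an automorphism of A. If the image of φ in the outer automorphism group Out(A) has infinite order, then the center of Γ equals Z(A) ∩ Fix φ. -/

import Mathlib

/-!
Internal characterization of the HNN extension `Γ = A*_φ`:
`A` is a subgroup of `Γ`, `t ∈ Γ` is the stable letter, `Cm = C_{-1}` and
`Cp = C_{+1}` are subgroups of `A` with `t⁻¹ Cm t = Cp` (so
`φ(c) = t⁻¹ c t` for `c ∈ Cm`), `A ∪ {t}` generates `Γ`, and Britton's lemma
holds: a reduced word `g₀ t^{ε₁} g₁ ⋯ t^{εₙ} gₙ` with `n ≥ 1` is nontrivial.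
-/

variable {Γ : Type*} [Group Γ]

/-- The subgroup `C_ε` : `C_{+1} = Cp` when `ε = 1`, and `C_{-1} = Cm`
otherwise. -/
def toCsub (Cm Cp : Subgroup Γ) (ε : ℤ) : Subgroup Γ := if ε = 1 then Cp else Cm

/-- The pair `(g₀, [(ε₁, g₁), …, (εₙ, gₙ)])` encodes the word
`g₀ t^{ε₁} g₁ ⋯ t^{εₙ} gₙ`; it is reduced when all `gᵢ ∈ A`, all `εᵢ = ±1`,
and it contains no pinch `t^{εᵢ} gᵢ t^{-εᵢ}` with `gᵢ ∈ C_{εᵢ}`. -/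
def HNNReducedWord (A Cm Cp : Subgroup Γ) (g₀ : Γ) (w : List (ℤ × Γ)) : Prop :=
  g₀ ∈ A ∧ (∀ p ∈ w, (p.1 = 1 ∨ p.1 = -1) ∧ p.2 ∈ A) ∧
    w.Chain' fun p q => q.1 = -p.1 → p.2 ∉ toCsub Cm Cp p.1

/-- The element of `Γ` represented by the word
`g₀ t^{ε₁} g₁ ⋯ t^{εₙ} gₙ`. -/
def hnnProd (t g₀ : Γ) (w : List (ℤ × Γ)) : Γ :=
  g₀ * (w.map fun p => t ^ p.1 * p.2).prod

/-- `Γ` is the HNN extension of its subgroup `A` relative to the isomorphism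
`φ : Cm → Cp`, `φ(c) = t⁻¹ c t`, with stable letter `t`. -/
def IsHNN (A Cm Cp : Subgroup Γ) (t : Γ) : Prop :=
  Cm ≤ A ∧ Cp ≤ A ∧ (∀ c : Γ, c ∈ Cm ↔ t⁻¹ * c * t ∈ Cp) ∧
    Subgroup.closure ((A : Set Γ) ∪ {t}) = ⊤ ∧
    ∀ g₀ w, HNNReducedWord A Cm Cp g₀ w → w ≠ [] → hnnProd t g₀ w ≠ 1

/-- `g` is cyclically reduced: `g ∈ A` (length 1), or `g` has a reduced form
`g₁ t^{ε₁} g₂ ⋯ gₙ t^{εₙ} gₙ₊₁` with `gₙ₊₁ = 1` and either `n = 1` or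
`t^{εₙ} g₁ t^{ε₁}` is not a pinch. -/
def HNNCyclicallyReduced (A Cm Cp : Subgroup Γ) (t g : Γ) : Prop :=
  g ∈ A ∨
    ∃ g₀ w, HNNReducedWord A Cm Cp g₀ w ∧ hnnProd t g₀ w = g ∧
      ∃ p q, w.head? = some q ∧ w.getLast? = some p ∧ p.2 = 1 ∧
        (w.length = 1 ∨ ¬(q.1 = -p.1 ∧ g₀ ∈ toCsub Cm Cp p.1))

/-- Center of an HNN extension, case (ii): if `C_{-1} = C_{+1} = A` (so
`φ : a ↦ t⁻¹ a t` is an automorphism of `A`) and `φ` has infinite order in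
`Out(A)` (no positive power of `φ` is inner), then the center of `Γ` is
`Z(A) ∩ Fix φ`. -/
theorem hnn_center_infinite_order (A Cm Cp : Subgroup Γ) (t : Γ)
    (hH : IsHNN A Cm Cp t) (hCm : Cm = A) (hCp : Cp = A)
    (hinf : ∀ n : ℕ, 0 < n →
      ¬∃ a₀ ∈ A, ∀ a ∈ A, (t ^ n)⁻¹ * a * t ^ n = a₀ * a * a₀⁻¹) :
    (Subgroup.center Γ : Set Γ) =
      {g : Γ | (g ∈ A ∧ ∀ a ∈ A, g * a = a * g) ∧ t⁻¹ * g * t = g} := by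
  obtain ⟨-, -, hconj, hclos, -⟩ := hH
  rw [hCm, hCp] at hconj
  -- conjugation by t and t⁻¹ preserves A
  have hc1 : ∀ a ∈ A, t⁻¹ * a * t ∈ A := fun a ha => (hconj a).1 ha
  have hc2 : ∀ a ∈ A, t * a * t⁻¹ ∈ A := by
    intro a ha
    refine (hconj (t * a * t⁻¹)).2 ?_
    have h : t⁻¹ * (t * a * t⁻¹) * t = a := by group
    rw [h]; exact ha
  have hzn : ∀ (n : ℤ), ∀ a ∈ A, t ^ n * a * (t ^ n)⁻¹ ∈ A := by
    intro n
    induction n using Int.induction_on with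
    | zero => intro a ha; simpa using ha
    | succ k ih =>
        intro a ha
        have h : t ^ ((k : ℤ) + 1) * a * (t ^ ((k : ℤ) + 1))⁻¹ =
            t * (t ^ (k : ℤ) * a * (t ^ (k : ℤ))⁻¹) * t⁻¹ := by group
        rw [h]; exact hc2 _ (ih a ha)
    | pred k ih =>
        intro a ha
        have h : t ^ (-(k : ℤ) - 1) * a * (t ^ (-(k : ℤ) - 1))⁻¹ =
            t⁻¹ * (t ^ (-(k : ℤ)) * a * (t ^ (-(k : ℤ)))⁻¹) * t := by group
        rw [h]; exact hc1 _ (ih a ha)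
  -- every element of Γ has the form t^n * a
  let S : Subgroup Γ :=
    { carrier := {g | ∃ n : ℤ, ∃ a ∈ A, g = t ^ n * a}
      one_mem' := ⟨0, 1, A.one_mem, by simp⟩
      mul_mem' := by
        rintro x y ⟨n, a, ha, rfl⟩ ⟨m, b, hb, rfl⟩
        refine ⟨n + m, (t ^ m)⁻¹ * a * t ^ m * b, A.mul_mem ?_ hb, by group⟩
        have := hzn (-m) a ha
        simpa [zpow_neg] using this
      inv_mem' := by
        rintro x ⟨n, a, ha, rfl⟩
        exact ⟨-n, t ^ n * a⁻¹ * (t ^ n)⁻¹, hzn n _ (A.inv_mem ha), by group⟩ }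
  have hS : ∀ g : Γ, ∃ n : ℤ, ∃ a ∈ A, g = t ^ n * a := by
    intro g
    have hle : Subgroup.closure ((A : Set Γ) ∪ {t}) ≤ S := by
      rw [Subgroup.closure_le]
      rintro x (hx | hx)
      · exact ⟨0, x, hx, by simp⟩
      · exact ⟨1, 1, A.one_mem, by simp [Set.mem_singleton_iff.mp hx]⟩
    exact hle (hclos ▸ Subgroup.mem_top g)
  ext g
  simp only [SetLike.mem_coe, Set.mem_setOf_eq]
  constructor
  · intro hg
    have hgc : ∀ b : Γ, b * g = g * b := Subgroup.mem_center_iff.mp hg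
    obtain ⟨n, a, ha, rfl⟩ := hS g
    have key : ∀ b ∈ A, (t ^ n)⁻¹ * b * t ^ n = a * b * a⁻¹ := by
      intro b hb
      have h := hgc b
      calc (t ^ n)⁻¹ * b * t ^ n
          = (t ^ n)⁻¹ * (b * (t ^ n * a)) * a⁻¹ := by group
        _ = (t ^ n)⁻¹ * (t ^ n * a * b) * a⁻¹ := by rw [h]
        _ = a * b * a⁻¹ := by group
    rcases lt_trichotomy n 0 with hn | hn | hn
    · -- n < 0 : contradiction with hinf at m = (-n).toNat
      exfalso
      set m : ℕ := (-n).toNat with hm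
      have hmpos : 0 < m := by omega
      have htm : (t : Γ) ^ m = (t ^ n)⁻¹ := by
        rw [← zpow_natCast, ← zpow_neg]
        congr 1
        omega
      refine hinf m hmpos ⟨a⁻¹, A.inv_mem ha, ?_⟩
      intro c hc
      have hk := key (a⁻¹ * c * a) (A.mul_mem (A.mul_mem (A.inv_mem ha) hc) ha)
      rw [show (t : Γ) ^ n = ((t ^ m)⁻¹ : Γ) by rw [htm, inv_inv]] at hk
      calc (t ^ m)⁻¹ * c * t ^ m
          = (t ^ m)⁻¹ * (a * (a⁻¹ * c * a) * a⁻¹) * t ^ m := by group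
        _ = (t ^ m)⁻¹ * (((t ^ m)⁻¹)⁻¹ * (a⁻¹ * c * a) * (t ^ m)⁻¹) * t ^ m := by
            rw [hk]
        _ = a⁻¹ * c * (a⁻¹)⁻¹ := by group
    · -- n = 0 : g = a ∈ A
      subst hn
      simp only [zpow_zero, one_mul] at hgc ⊢
      refine ⟨⟨ha, fun b _ => (hgc b).symm⟩, ?_⟩
      have ht := hgc t
      rw [mul_assoc, ← ht, ← mul_assoc, inv_mul_cancel, one_mul]
    · -- n > 0 : contradiction with hinf at m = n.toNat
      exfalso
      set m : ℕ := n.toNat with hm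
      have hmpos : 0 < m := by omega
      have htm : (t : Γ) ^ m = t ^ n := by
        rw [← zpow_natCast]
        congr 1
        omega
      refine hinf m hmpos ⟨a, ha, ?_⟩
      intro c hc
      rw [htm]
      exact key c hc
  · rintro ⟨⟨hgA, hcomm⟩, hfix⟩
    rw [Subgroup.mem_center_iff]
    intro x
    obtain ⟨n, b, hb, rfl⟩ := hS x
    have hct : Commute g t := by
      show g * t = t * g
      calc g * t = t * (t⁻¹ * g * t) := by group
        _ = t * g := by rw [hfix]
    calc t ^ n * b * g = t ^ n * (b * g) := by rw [mul_assoc]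
      _ = t ^ n * (g * b) := by rw [← hcomm b hb]
      _ = t ^ n * g * b := by rw [mul_assoc]
      _ = g * t ^ n * b := by rw [← (hct.zpow_right n).eq]
      _ = g * (t ^ n * b) := by rw [mul_assoc]
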